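/- For every b : ω → ω with b(n) ≥ 1 for all n, the prediction forcing PR_b is σ-soft-linked. -/

import Mathlib

universe u

variable {α : Type u} [Preorder α]

/-- `p` and `q` are compatible: some `r` extends both. -/
def Compat (p q : α) : Prop := ∃ r : α, r ≤ p ∧ r ≤ q

/-- `A` is a maximal antichain: pairwise incompatible, and every condition is
compatible with a member of `A`. -/
def IsMaxAC (A : Set α) : Prop :=
  (∀ p ∈ A, ∀ q ∈ A, p ≠ q → ¬Compat p q) ∧ ∀ p : α, ∃ q ∈ A, Compat p q

/-- `Q` is leaf-linked: for every maximal antichain enumerated as `{p n : n ∈ ω}`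
there is `n` such that every `q ∈ Q` is compatible with some `p j`, `j < n`. -/
def LeafLinked (Q : Set α) : Prop :=
  ∀ p : ℕ → α, IsMaxAC (Set.range p) → ∃ n : ℕ, ∀ q ∈ Q, ∃ j < n, Compat q (p j)

/-- `D` is dense in the preorder. -/
def DenseSub (D : Set α) : Prop := ∀ p : α, ∃ q ∈ D, q ≤ p

/-- The countable chain condition: every antichain is countable. -/
def CCC (α : Type u) [Preorder α] : Prop :=
  ∀ A : Set α, (∀ p ∈ A, ∀ q ∈ A, p ≠ q → ¬Compat p q) → A.Countable

/-- `P` is σ-soft-linked. -/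
def SigmaSoftLinked (α : Type u) [Preorder α] : Prop :=
  ∃ Q : ℕ → Set α, (∀ n, LeafLinked (Q n)) ∧ DenseSub (⋃ n, Q n) ∧
    ∀ n n' : ℕ, ∃ k : ℕ, ∀ p ∈ Q n, ∀ q ∈ Q n',
      Compat p q → ∃ r ∈ Q k, r ≤ p ∧ r ≤ q

/-- `f` codes a member of `∏_{n<k} b n` for some `k ≤ ω`, as a partial
function `ℕ → Option ℕ` whose domain is `{n : n < k}`. -/
def IsSeq (b : ℕ → ℕ) (f : ℕ → Option ℕ) : Prop :=
  (∀ n v, f n = some v → v < b n) ∧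
    ∃ k : ℕ∞, ∀ n : ℕ, (f n).isSome ↔ (n : ℕ∞) < k

/-- Extension of partial functions: `f ⊆ g`. -/
def SubFun (f g : ℕ → Option ℕ) : Prop := ∀ n v, f n = some v → g n = some v

/-- Conditions of the prediction forcing `PR_b`: triples `(A, π, F)` with
`A ⊆ ω` finite, `π n : ∏_{m<n} b m → b n` for `n ∈ A` (coded on all of `ω`;
only the values on `A` are relevant for the order), and `F` a finite set of
members of `∏_{n<k} b n`, `k ≤ ω`. -/
structure PRCond (b : ℕ → ℕ) where
  A : Finset ℕ
  pr : ∀ n : ℕ, ((k : Fin n) → Fin (b k)) → Fin (b n)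
  F : Set (ℕ → Option ℕ)
  hF : F.Finite
  hFseq : ∀ f ∈ F, IsSeq b f

/-- The order of `PR_b`: `(A',π',F') ≤ (A,π,F)` iff (a) `A ⊆ A'`, `π ⊆ π'`;
(b) every member of `A'∖A` lies above every member of `A`; (c) every `f ∈ F`
has an extension in `F'`; (d) `π'_n(f↾n) = f n` for every `f ∈ F` and every
`n ∈ (A'∖A) ∩ dom f`. -/
def PRle {b : ℕ → ℕ} (x y : PRCond b) : Prop :=
  (y.A ⊆ x.A ∧ ∀ n ∈ y.A, x.pr n = y.pr n) ∧
  (∀ n ∈ y.A, ∀ n' ∈ x.A, n' ∉ y.A → n < n') ∧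
  (∀ f ∈ y.F, ∃ g ∈ x.F, SubFun f g) ∧
  (∀ f ∈ y.F, ∀ n ∈ x.A, n ∉ y.A → ∀ v : ℕ, f n = some v →
    ∀ g : (k : Fin n) → Fin (b k),
      (∀ k : Fin n, f (k : ℕ) = some ((g k : ℕ))) → ((x.pr n g : ℕ)) = v)

instance {b : ℕ → ℕ} : Preorder (PRCond b) where
  le := PRle
  le_refl x :=
    ⟨⟨subset_rfl, fun _ _ => rfl⟩,
      fun n hn n' hn' h => absurd hn' h,
      fun f hf => ⟨f, hf, fun _ _ h => h⟩,
      fun f hf n hn hn' => absurd hn hn'⟩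
  le_trans x y z hxy hyz := by
    obtain ⟨⟨ha1, ha2⟩, hb, hc, hd⟩ := hxy
    obtain ⟨⟨ha1', ha2'⟩, hb', hc', hd'⟩ := hyz
    refine ⟨⟨ha1'.trans ha1,
      fun n hn => (ha2 n (ha1' hn)).trans (ha2' n hn)⟩, ?_, ?_, ?_⟩
    · intro n hn n' hn' hn''
      by_cases hmem : n' ∈ y.A
      · exact hb' n hn n' hmem hn''
      · exact hb n (ha1' hn) n' hn' hmem
    · intro f hf
      obtain ⟨g, hg, hfg⟩ := hc' f hf
      obtain ⟨g', hg', hgg'⟩ := hc g hg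
      exact ⟨g', hg', fun n v hv => hgg' n v (hfg n v hv)⟩
    · intro f hf n hn hn' v hv g hg
      by_cases hmem : n ∈ y.A
      · rw [ha2 n hmem]
        exact hd' f hf n hmem hn' v hv g hg
      · obtain ⟨f', hf', hff'⟩ := hc' f hf
        exact hd f' hf' n hn hmem v (hff' n v hv) g
          (fun k => hff' _ _ (hg k))


section SSL

variable {b : ℕ → ℕ}

private lemma PRle_def {x y : PRCond b} : x ≤ y ↔ PRle x y := Iff.rfl

private lemma isSeq_of_mono {f : ℕ → Option ℕ} (hv : ∀ n v, f n = some v → v < b n)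
    (hdc : ∀ n n', n ≤ n' → (f n').isSome → (f n).isSome) : IsSeq b f := by
  refine ⟨hv, ?_⟩
  by_cases h : ∀ n, (f n).isSome
  · exact ⟨⊤, fun n => by simp [h n]⟩
  · push_neg at h
    have h' : ∃ n, ¬ (f n).isSome = true := by
      obtain ⟨n, hn⟩ := h; exact ⟨n, by simpa using hn⟩
    refine ⟨((Nat.find h' : ℕ) : ℕ∞), fun n => ?_⟩
    constructor
    · intro hs
      rw [Nat.cast_lt]
      by_contra hle
      exact Nat.find_spec h' (hdc _ n (le_of_not_gt hle) hs)
    · intro hlt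
      rw [Nat.cast_lt] at hlt
      by_contra hns
      exact (Nat.find_min h' hlt) (by simpa using hns)

private lemma isSeq_none : IsSeq b (fun _ => none) :=
  ⟨fun n v hv => (by cases hv), ⟨0, fun n => by simp⟩⟩

private lemma ulim (U : Ultrafilter ℕ) {β : Type*} (h : ℕ → β) {S : Set β} (hS : S.Finite)
    (hh : ∀ m, h m ∈ S) : ∃ o, {m | h m = o} ∈ U := by
  have huniv : (⋃ o ∈ S, {m | h m = o}) ∈ U := by
    have : (⋃ o ∈ S, {m | h m = o}) = Set.univ := by
      ext m
      simp only [Set.mem_iUnion, Set.mem_setOf_eq, Set.mem_univ, iff_true]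
      exact ⟨h m, hh m, rfl⟩
    rw [this]; exact Filter.univ_mem
  obtain ⟨o, _, ho⟩ := (Ultrafilter.finite_biUnion_mem_iff hS).1 huniv
  exact ⟨o, ho⟩

/-- The canonical amalgam of two conditions. -/
def amalgCond (p q : PRCond b) : PRCond b :=
  ⟨q.A, q.pr, p.F ∪ q.F, p.hF.union q.hF,
    fun f hf => hf.elim (p.hFseq f) (q.hFseq f)⟩

private lemma amalg_le {p q : PRCond b} (h : Compat p q) (hA : p.A ⊆ q.A) :
    amalgCond p q ≤ p ∧ amalgCond p q ≤ q := by
  obtain ⟨s, hsp, hsq⟩ := h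
  obtain ⟨⟨hsp1, hsp2⟩, hspb, _, hspd⟩ := PRle_def.1 hsp
  obtain ⟨⟨hsq1, hsq2⟩, _, _, _⟩ := PRle_def.1 hsq
  constructor
  · refine PRle_def.2 ⟨⟨hA, fun n hn => ?_⟩, ?_, ?_, ?_⟩
    · exact (hsq2 n (hA hn)).symm.trans (hsp2 n hn)
    · intro n hn n' hn' hn''
      exact hspb n hn n' (hsq1 hn') hn''
    · intro f hf; exact ⟨f, Or.inl hf, fun _ _ hv => hv⟩
    · intro f hf n hn hn' v hv g hg
      have := hspd f hf n (hsq1 hn) hn' v hv g hg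
      rwa [hsq2 n hn] at this
  · exact PRle_def.2 ⟨⟨subset_rfl, fun _ _ => rfl⟩, fun n hn n' hn' h' => absurd hn' h',
      fun f hf => ⟨f, Or.inr hf, fun _ _ hv => hv⟩, fun f hf n hn hn' => absurd hn hn'⟩

private lemma compat_sub {p q : PRCond b} (h : Compat p q) : p.A ⊆ q.A ∨ q.A ⊆ p.A := by
  by_contra hc
  push_neg at hc
  obtain ⟨h1, h2⟩ := hc
  obtain ⟨m, hm, hm'⟩ := Finset.not_subset.1 h1
  obtain ⟨m', hm2, hm2'⟩ := Finset.not_subset.1 h2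
  obtain ⟨s, hsp, hsq⟩ := h
  obtain ⟨⟨hsp1, _⟩, hspb, _, _⟩ := PRle_def.1 hsp
  obtain ⟨⟨hsq1, _⟩, hsqb, _, _⟩ := PRle_def.1 hsq
  have e1 : m' < m := hsqb m' hm2 m (hsp1 hm) hm'
  have e2 : m < m' := hspb m hm m' (hsq1 hm2) hm2'
  omega

/-- Predictor data restricted to a finite set. -/
def PrData (b : ℕ → ℕ) (A : Finset ℕ) : Type :=
  ∀ n : A, ((k : Fin (n : ℕ)) → Fin (b k)) → Fin (b (n : ℕ))

instance (A : Finset ℕ) : Finite (PrData b A) := by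
  unfold PrData; infer_instance

/-- The linked pieces of the forcing. -/
def Qset (b : ℕ → ℕ) (A : Finset ℕ) (πA : PrData b A) (l : ℕ) : Set (PRCond b) :=
  {x | x.A = A ∧ (∀ n (h : n ∈ A), x.pr n = πA ⟨n, h⟩) ∧ x.F.ncard ≤ l}

private lemma leafLinked_Qset (hb : ∀ n, 1 ≤ b n) (A : Finset ℕ) (πA : PrData b A) (l : ℕ) :
    LeafLinked (Qset b A πA l) := by
  classical
  intro p hp
  by_contra hcon
  push_neg at hcon
  choose q hqQ hqinc using hcon
  -- enumerate the F-parts uniformly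
  set σ : ℕ → Fin l → ℕ → Option ℕ :=
    fun m i => ((q m).hF.toFinset.toList).getD i (fun _ => none) with hσ
  have hσmem : ∀ m (i : Fin l), σ m i ∈ (q m).F ∨ σ m i = fun _ => none := by
    intro m i
    by_cases h : (i : ℕ) < ((q m).hF.toFinset.toList).length
    · left
      have hmem := List.getElem_mem h
      rw [Finset.mem_toList, Set.Finite.mem_toFinset] at hmem
      rw [hσ]
      show ((q m).hF.toFinset.toList).getD (↑i) (fun _ => none) ∈ (q m).F
      rw [List.getD_eq_getElem _ _ h]
      exact hmem
    · right
      rw [hσ]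
      show ((q m).hF.toFinset.toList).getD (↑i) (fun _ => none) = fun _ => none
      rw [List.getD_eq_default _ _ (le_of_not_gt h)]
  have hσseq : ∀ m (i : Fin l), IsSeq b (σ m i) := by
    intro m i
    rcases hσmem m i with h | h
    · exact (q m).hFseq _ h
    · rw [h]; exact isSeq_none
  have hσcover : ∀ m, ∀ g ∈ (q m).F, ∃ i : Fin l, σ m i = g := by
    intro m g hg
    have hmem : g ∈ (q m).hF.toFinset.toList := by
      rw [Finset.mem_toList, Set.Finite.mem_toFinset]; exact hg
    obtain ⟨i, hi, hgi⟩ := List.mem_iff_getElem.1 hmem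
    have hlen : ((q m).hF.toFinset.toList).length ≤ l := by
      rw [Finset.length_toList, ← Set.ncard_eq_toFinset_card _ (q m).hF]
      exact (hqQ m).2.2
    refine ⟨⟨i, lt_of_lt_of_le hi hlen⟩, ?_⟩
    rw [hσ]
    show ((q m).hF.toFinset.toList).getD i (fun _ => none) = g
    rw [List.getD_eq_getElem _ _ hi]
    exact hgi
  -- ultrafilter limits
  let U : Ultrafilter ℕ := Filter.hyperfilter ℕ
  have hGlim : ∀ (i : Fin l) (n : ℕ), ∃ o : Option ℕ, {m | σ m i n = o} ∈ U := by
    intro i n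
    refine ulim U (fun m => σ m i n)
      (S := insert none (Option.some '' Set.Iio (b n)))
      (((Set.finite_Iio _).image _).insert _) (fun m => ?_)
    show σ m i n ∈ _
    cases hcase : σ m i n with
    | none => exact Set.mem_insert _ _
    | some v => exact Set.mem_insert_of_mem _ ⟨v, (hσseq m i).1 n v hcase, rfl⟩
  choose Glim hGl using hGlim
  have hGseq : ∀ i, IsSeq b (Glim i) := by
    intro i
    apply isSeq_of_mono
    · intro n v hv
      obtain ⟨m, hm⟩ := Ultrafilter.nonempty_of_mem (hGl i n)
      exact (hσseq m i).1 n v (hm.trans hv)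
    · intro n n' hle hs'
      have hmem : ({m | σ m i n = Glim i n} ∩ {m | σ m i n' = Glim i n'}) ∈ U :=
        Filter.inter_mem (hGl i n) (hGl i n')
      obtain ⟨m, hm1, hm2⟩ := Ultrafilter.nonempty_of_mem hmem
      obtain ⟨hv, k, hk⟩ := hσseq m i
      rw [← hm2] at hs'
      have hnk : (n : ℕ∞) < k :=
        lt_of_le_of_lt (Nat.cast_le.2 hle) ((hk n').1 hs')
      rw [← hm1]
      exact (hk n).2 hnk
  -- the limit condition
  let prFull : ∀ n : ℕ, ((k : Fin n) → Fin (b k)) → Fin (b n) :=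
    fun n => if h : n ∈ A then πA ⟨n, h⟩ else fun _ => ⟨0, hb n⟩
  let r : PRCond b := ⟨A, prFull, Set.range Glim, Set.finite_range _,
    fun f hf => by obtain ⟨i, rfl⟩ := hf; exact hGseq i⟩
  obtain ⟨q', ⟨j, rfl⟩, hcompat⟩ := hp.2 r
  obtain ⟨r', hr'r, hr'p⟩ := hcompat
  set M : ℕ := Finset.sup r'.A id with hM
  have hev : ∀ᶠ m in (U : Filter ℕ),
      (∀ i : Fin l, ∀ n ∈ Finset.Iic M, σ m i n = Glim i n) ∧ j < m := by
    refine Filter.Eventually.and ?_ ?_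
    · rw [Filter.eventually_all]
      intro i
      rw [Filter.eventually_all_finset]
      intro n _
      exact hGl i n
    · refine Filter.mem_hyperfilter_of_finite_compl ((Set.finite_Iic j).subset ?_)
      intro m hm
      simp only [Set.mem_compl_iff, Set.mem_setOf_eq, not_lt] at hm
      exact hm
  obtain ⟨m, hmE, hjm⟩ := hev.exists
  -- the common extension of r' and q m
  let s : PRCond b := ⟨r'.A, r'.pr, r'.F ∪ (q m).F, r'.hF.union (q m).hF,
    fun f hf => hf.elim (r'.hFseq f) ((q m).hFseq f)⟩
  have hsr' : s ≤ r' := PRle_def.2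
    ⟨⟨subset_rfl, fun _ _ => rfl⟩, fun n hn n' hn' h' => absurd hn' h',
      fun f hf => ⟨f, Or.inl hf, fun _ _ hv => hv⟩, fun f hf n hn hn' => absurd hn hn'⟩
  obtain ⟨⟨hr1, hr2⟩, hrb, _, hrd⟩ := PRle_def.1 hr'r
  obtain ⟨hqA, hqpr, _⟩ := hqQ m
  have hsq : s ≤ q m := by
    refine PRle_def.2 ⟨⟨?_, ?_⟩, ?_, ?_, ?_⟩
    · rw [hqA]; exact hr1
    · intro n hn
      rw [hqA] at hn
      show r'.pr n = (q m).pr n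
      rw [hqpr n hn, hr2 n hn]
      exact dif_pos hn
    · intro n hn n' hn' hn''
      rw [hqA] at hn hn''
      exact hrb n hn n' hn' hn''
    · intro f hf; exact ⟨f, Or.inr hf, fun _ _ hv => hv⟩
    · intro f hf n hn hn' v hv g hg
      obtain ⟨i, hi⟩ := hσcover m f hf
      rw [hqA] at hn'
      have hnM : n ≤ M := Finset.le_sup (f := id) hn
      have hGn : Glim i n = some v := by
        rw [← hmE i n (Finset.mem_Iic.2 hnM), hi]; exact hv
      have hGk : ∀ k : Fin n, Glim i (k : ℕ) = some ((g k : ℕ)) := by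
        intro k
        rw [← hmE i k (Finset.mem_Iic.2 (le_trans (le_of_lt k.2) hnM)), hi]
        exact hg k
      exact hrd (Glim i) ⟨i, rfl⟩ n hn hn' v hGn g hGk
  exact hqinc m j hjm ⟨s, hsq, le_trans hsr' hr'p⟩

end SSL

/-- For every `b : ω → ω` with `b n ≥ 1` for all `n`, the prediction forcing
`PR_b` is σ-soft-linked. -/
theorem stmt18 (b : ℕ → ℕ) (hb : ∀ n, 1 ≤ b n) :
    SigmaSoftLinked (PRCond b) := by
  classical
  haveI : Nonempty (Σ A : Finset ℕ, PrData b A × ℕ) :=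
    ⟨⟨∅, fun n => (Finset.notMem_empty _ n.2).elim, 0⟩⟩
  obtain ⟨e, he⟩ := exists_surjective_nat (Σ A : Finset ℕ, PrData b A × ℕ)
  refine ⟨fun n => Qset b (e n).1 (e n).2.1 (e n).2.2,
    fun n => leafLinked_Qset hb _ _ _, ?_, ?_⟩
  · intro x
    obtain ⟨n, hn⟩ := he ⟨x.A, fun k => x.pr k, x.F.ncard⟩
    refine ⟨x, Set.mem_iUnion.2 ⟨n, ?_⟩, le_refl x⟩
    rw [hn]
    exact ⟨rfl, fun _ _ => rfl, le_rfl⟩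
  · intro n n'
    by_cases hsub : (e n).1 ⊆ (e n').1
    · obtain ⟨k, hk⟩ := he ⟨(e n').1, (e n').2.1, (e n).2.2 + (e n').2.2⟩
      refine ⟨k, fun p hp q hq hpq => ?_⟩
      have hA : p.A ⊆ q.A := by rw [hp.1, hq.1]; exact hsub
      obtain ⟨h1, h2⟩ := amalg_le hpq hA
      refine ⟨amalgCond p q, ?_, h1, h2⟩
      show amalgCond p q ∈ Qset b (e k).1 (e k).2.1 (e k).2.2
      rw [hk]
      exact ⟨hq.1, fun m hm => hq.2.1 m hm,
        (Set.ncard_union_le _ _).trans (add_le_add hp.2.2 hq.2.2)⟩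
    · obtain ⟨k, hk⟩ := he ⟨(e n).1, (e n).2.1, (e n').2.2 + (e n).2.2⟩
      refine ⟨k, fun p hp q hq hpq => ?_⟩
      have hA : q.A ⊆ p.A := by
        rcases compat_sub hpq with h | h
        · rw [hp.1, hq.1] at h
          exact absurd h hsub
        · exact h
      have hqp : Compat q p := let ⟨s, h1, h2⟩ := hpq; ⟨s, h2, h1⟩
      obtain ⟨h1, h2⟩ := amalg_le hqp hA
      refine ⟨amalgCond q p, ?_, h2, h1⟩
      show amalgCond q p ∈ Qset b (e k).1 (e k).2.1 (e k).2.2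
      rw [hk]
      exact ⟨hp.1, fun m hm => hp.2.1 m hm,
        (Set.ncard_union_le _ _).trans (add_le_add hq.2.2 hp.2.2)⟩
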